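/- A unit-speed curve α with positive curvature is a geodesic on some general cone with vertex at the origin if and only if α is a rectifying curve. -/

import Mathlib

open Real Set
open scoped RealInnerProductSpace

noncomputable section

/-- Euclidean 3-space. -/
abbrev E3 := EuclideanSpace ℝ (Fin 3)

/-- Constructor for points of `E3`. -/
def e3 (x y z : ℝ) : E3 := (WithLp.equiv 2 (Fin 3 → ℝ)).symm ![x, y, z]

/-- The cross product on `E3`. -/
def cross3 (a b : E3) : E3 :=
  e3 (a 1 * b 2 - a 2 * b 1) (a 2 * b 0 - a 0 * b 2) (a 0 * b 1 - a 1 * b 0)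


lemma inner_e3 (x y : E3) : ⟪x,y⟫ = x 0 * y 0 + x 1 * y 1 + x 2 * y 2 := by
  simp [PiLp.inner_apply, Fin.sum_univ_three, RCLike.inner_apply, mul_comm]

lemma cross3_apply (a b : E3) :
    cross3 a b 0 = a 1 * b 2 - a 2 * b 1 ∧ cross3 a b 1 = a 2 * b 0 - a 0 * b 2 ∧
    cross3 a b 2 = a 0 * b 1 - a 1 * b 0 := by
  refine ⟨?_, ?_, ?_⟩ <;> simp [cross3, e3]

lemma inner_cross_left (u v : E3) : ⟪u, cross3 u v⟫ = 0 := by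
  simp [inner_e3, cross3, e3, Fin.sum_univ_three]; ring

lemma inner_cross_right (u v : E3) : ⟪v, cross3 u v⟫ = 0 := by
  simp [inner_e3, cross3, e3, Fin.sum_univ_three]; ring

lemma lagrange (u v : E3) : ⟪cross3 u v, cross3 u v⟫ = ⟪u,u⟫*⟪v,v⟫ - ⟪u,v⟫^2 := by
  simp only [inner_e3]; simp [ cross3, e3, Fin.sum_univ_three]; ring

lemma gram (u v w : E3) : ⟪w, cross3 u v⟫^2 =
    ⟪w,w⟫*(⟪u,u⟫*⟪v,v⟫ - ⟪u,v⟫^2) - ⟪w,u⟫*(⟪w,u⟫*⟪v,v⟫ - ⟪w,v⟫*⟪u,v⟫)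
      + ⟪w,v⟫*(⟪w,u⟫*⟪u,v⟫ - ⟪w,v⟫*⟪u,u⟫) := by
  simp only [inner_e3]; simp [ cross3, e3, Fin.sum_univ_three]; ring

lemma cross_cross_self (u v : E3) : cross3 u (cross3 u v) = ⟪u,v⟫ • u - ⟪u,u⟫ • v := by
  apply PiLp.ext
  intro i
  fin_cases i <;> simp only [inner_e3] <;> simp [cross3, e3, Fin.sum_univ_three] <;> ring

lemma cross3_combo (p q : E3) (x y z w : ℝ) :
    cross3 (x•p + y•q) (z•p + w•q) = (x*w - y*z) • cross3 p q := by
  apply PiLp.ext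
  intro i
  fin_cases i <;> simp [cross3, e3] <;> ring

lemma basis_decomp (u v : E3) (huu : ⟪u,u⟫ = 1) (hvv : ⟪v,v⟫ = 1) (huv : ⟪u,v⟫ = 0) (w : E3) :
    w = ⟪w,u⟫ • u + ⟪w,v⟫ • v + ⟪w, cross3 u v⟫ • cross3 u v := by
  have hwB : ⟪w, cross3 u v⟫^2 = ⟪w,w⟫ - ⟪w,u⟫^2 - ⟪w,v⟫^2 := by
    have h := gram u v w
    rw [huu, hvv, huv] at h
    linear_combination h
  have hcu : ⟪cross3 u v, u⟫ = 0 := by rw [real_inner_comm]; exact inner_cross_left u v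
  have hcv : ⟪cross3 u v, v⟫ = 0 := by rw [real_inner_comm]; exact inner_cross_right u v
  have hd : ⟪w - (⟪w,u⟫ • u + ⟪w,v⟫ • v + ⟪w, cross3 u v⟫ • cross3 u v),
      w - (⟪w,u⟫ • u + ⟪w,v⟫ • v + ⟪w, cross3 u v⟫ • cross3 u v)⟫ = 0 := by
    simp only [inner_sub_left, inner_sub_right, inner_add_left, inner_add_right,
      real_inner_smul_left, real_inner_smul_right, huu, hvv, huv, lagrange,
      inner_cross_left, inner_cross_right,
      hcu, hcv]
    have c1 : ⟪u,w⟫ = ⟪w,u⟫ := real_inner_comm w u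
    have c2 : ⟪v,w⟫ = ⟪w,v⟫ := real_inner_comm w v
    have c3 : ⟪cross3 u v, w⟫ = ⟪w, cross3 u v⟫ := real_inner_comm w _
    have c4 : ⟪v,u⟫ = 0 := by rw [real_inner_comm]; exact huv
    rw [c1, c2, c3, c4]
    linear_combination -hwB
  exact sub_eq_zero.mp (inner_self_eq_zero.mp hd)

set_option maxHeartbeats 1000000 in
/-- A unit-speed curve with positive curvature is a geodesic on some general cone
with vertex at the origin (its principal normal is parallel to the surface
normal along it) iff it is a rectifying curve. -/
theorem geodesic_on_cone_iff_rectifying (I : Set ℝ) (hIo : IsOpen I) (hIc : Convex ℝ I)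
    (α T N B : ℝ → E3) (κ τ : ℝ → ℝ)
    (hα : ∀ s ∈ I, HasDerivAt α (T s) s)
    (hT : ∀ s ∈ I, HasDerivAt T (κ s • N s) s)
    (hN : ∀ s ∈ I, HasDerivAt N ((-κ s) • T s + τ s • B s) s)
    (hB : ∀ s ∈ I, HasDerivAt B ((-τ s) • N s) s)
    (hTu : ∀ s ∈ I, ‖T s‖ = 1)
    (hNu : ∀ s ∈ I, ‖N s‖ = 1)
    (hBdef : ∀ s ∈ I, B s = cross3 (T s) (N s))
    (hκ : ∀ s ∈ I, 0 < κ s)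
    (hne : I.Nonempty) :
    (∃ (y : ℝ → E3) (u t : ℝ → ℝ), ∀ s ∈ I,
        ‖y (t s)‖ = 1 ∧
        HasDerivAt y (deriv y (t s)) (t s) ∧
        ‖deriv y (t s)‖ = 1 ∧
        0 < u s ∧
        α s = u s • y (t s) ∧
        (N s = cross3 (deriv y (t s)) (y (t s)) ∨
         N s = -cross3 (deriv y (t s)) (y (t s)))) ↔ (∀ s ∈ I, ⟪α s, N s⟫ = 0) := by
  constructor
  · rintro ⟨y, u, t, h⟩ s hs
    obtain ⟨h1, h2, h3, h4, h5, h6⟩ := h s hs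
    rw [h5]
    rcases h6 with h6 | h6 <;> rw [h6]
    · rw [real_inner_smul_left, inner_cross_right, mul_zero]
    · rw [inner_neg_right, real_inner_smul_left, inner_cross_right, mul_zero, neg_zero]
  · intro hrect
    obtain ⟨s₀, hs₀⟩ := hne
    have iTT : ∀ s ∈ I, ⟪T s, T s⟫ = 1 := fun s hs => by
      rw [real_inner_self_eq_norm_mul_norm, hTu s hs]; norm_num
    have iNN : ∀ s ∈ I, ⟪N s, N s⟫ = 1 := fun s hs => by
      rw [real_inner_self_eq_norm_mul_norm, hNu s hs]; norm_num
    have iTN : ∀ s ∈ I, ⟪T s, N s⟫ = 0 := by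
      intro s hs
      have h1 : HasDerivAt (fun x => ⟪T x, T x⟫) (⟪T s, κ s • N s⟫ + ⟪κ s • N s, T s⟫) s :=
        HasDerivAt.inner ℝ (hT s hs) (hT s hs)
      have h2 : HasDerivAt (fun x => ⟪T x, T x⟫) 0 s := by
        have he : (fun x => ⟪T x, T x⟫) =ᶠ[nhds s] (fun _ => (1:ℝ)) := by
          filter_upwards [hIo.mem_nhds hs] with x hx using iTT x hx
        exact (hasDerivAt_const s (1:ℝ)).congr_of_eventuallyEq he
      have h3 := h1.unique h2
      rw [real_inner_smul_right, real_inner_smul_left,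
        real_inner_comm (T s) (N s)] at h3
      have h4 : κ s * ⟪T s, N s⟫ = 0 := by linarith
      exact (mul_eq_zero.mp h4).resolve_left (hκ s hs).ne'
    have iTB : ∀ s ∈ I, ⟪T s, B s⟫ = 0 := fun s hs => by
      rw [hBdef s hs]; exact inner_cross_left _ _
    have iNB : ∀ s ∈ I, ⟪N s, B s⟫ = 0 := fun s hs => by
      rw [hBdef s hs]; exact inner_cross_right _ _
    have iBB : ∀ s ∈ I, ⟪B s, B s⟫ = 1 := fun s hs => by
      rw [hBdef s hs, lagrange, iTT s hs, iNN s hs, iTN s hs]; ring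
    have iBT : ∀ s ∈ I, ⟪B s, T s⟫ = 0 := fun s hs => by
      rw [real_inner_comm]; exact iTB s hs
    -- the tangential and binormal components
    have hA' : ∀ s ∈ I, HasDerivAt (fun x => ⟪α x, T x⟫) 1 s := by
      intro s hs
      have h := HasDerivAt.inner ℝ (hα s hs) (hT s hs)
      rwa [real_inner_smul_right, hrect s hs, mul_zero, zero_add, iTT s hs] at h
    have hB' : ∀ s ∈ I, HasDerivAt (fun x => ⟪α x, B x⟫) 0 s := by
      intro s hs
      have h := HasDerivAt.inner ℝ (hα s hs) (hB s hs)
      rwa [real_inner_smul_right, hrect s hs, mul_zero, zero_add, iTB s hs] at h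
    have key : ∀ s ∈ I, κ s * ⟪α s, T s⟫ = τ s * ⟪α s, B s⟫ := by
      intro s hs
      have h1 : HasDerivAt (fun x => ⟪α x, N x⟫)
          (⟪α s, (-κ s) • T s + τ s • B s⟫ + ⟪T s, N s⟫) s :=
        HasDerivAt.inner ℝ (hα s hs) (hN s hs)
      have h2 : HasDerivAt (fun x => ⟪α x, N x⟫) 0 s := by
        have he : (fun x => ⟪α x, N x⟫) =ᶠ[nhds s] (fun _ => (0:ℝ)) := by
          filter_upwards [hIo.mem_nhds hs] with x hx using hrect x hx
        exact (hasDerivAt_const s (0:ℝ)).congr_of_eventuallyEq he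
      have h3 := h1.unique h2
      rw [inner_add_right, real_inner_smul_right, real_inner_smul_right, iTN s hs] at h3
      linarith
    -- constancy helper
    have const_of : ∀ f : ℝ → ℝ, (∀ s ∈ I, HasDerivAt f 0 s) → ∀ s ∈ I, f s = f s₀ := by
      intro f hf s hs
      refine hIc.is_const_of_fderivWithin_eq_zero
        (fun x hx => ((hf x hx).differentiableAt).differentiableWithinAt) ?_ hs hs₀
      intro x hx
      rw [fderivWithin_of_isOpen hIo hx, (hf x hx).hasFDerivAt.fderiv]
      exact ContinuousLinearMap.ext fun z => by simp
    obtain ⟨c, hc⟩ : ∃ c : ℝ, c = ⟪α s₀, T s₀⟫ - s₀ := ⟨_, rfl⟩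
    obtain ⟨μ, hμdef⟩ : ∃ μ : ℝ, μ = ⟪α s₀, B s₀⟫ := ⟨_, rfl⟩
    have hAs : ∀ s ∈ I, ⟪α s, T s⟫ = s + c := by
      intro s hs
      have h := const_of (fun x => ⟪α x, T x⟫ - x)
        (fun x hx => by have h := (hA' x hx).sub (hasDerivAt_id' x); rw [sub_self] at h; exact h) s hs
      rw [hc]; linarith
    have hBs : ∀ s ∈ I, ⟪α s, B s⟫ = μ := fun s hs => by
      rw [hμdef]; exact const_of _ hB' s hs
    have hμ : μ ≠ 0 := by
      intro h0
      have hA0 : ∀ s ∈ I, s + c = 0 := by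
        intro s hs
        have hk := key s hs
        rw [hBs s hs, h0, mul_zero, hAs s hs] at hk
        exact (mul_eq_zero.mp hk).resolve_left (hκ s hs).ne'
      obtain ⟨ε, hε, hball⟩ := Metric.isOpen_iff.mp hIo s₀ hs₀
      have h1 := hA0 s₀ hs₀
      have h2 : s₀ + ε/2 ∈ I := by
        apply hball
        rw [Metric.mem_ball, Real.dist_eq, show s₀ + ε/2 - s₀ = ε/2 by ring,
          abs_of_pos (by linarith)]
        linarith
      have h3 := hA0 _ h2
      linarith
    have hdec : ∀ s ∈ I, α s = (s + c) • T s + μ • B s := by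
      intro s hs
      have h := basis_decomp (T s) (N s) (iTT s hs) (iNN s hs) (iTN s hs) (α s)
      rw [← hBdef s hs, hrect s hs, zero_smul, add_zero, hAs s hs, hBs s hs] at h
      exact h
    have hnr : ∀ s ∈ I, ‖α s‖^2 = (s+c)^2 + μ^2 := by
      intro s hs
      rw [← real_inner_self_eq_norm_sq, hdec s hs]
      simp only [inner_add_left, inner_add_right, real_inner_smul_left, real_inner_smul_right,
        iTT s hs, iTB s hs, iBT s hs, iBB s hs]
      ring
    have hαne : ∀ s ∈ I, α s ≠ 0 := by
      intro s hs h0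
      have h := hnr s hs
      rw [h0, norm_zero] at h
      have : μ^2 > 0 := by positivity
      nlinarith [sq_nonneg (s+c)]
    have habs : |μ| ≠ 0 := abs_ne_zero.mpr hμ
    have habs2 : |μ|^2 = μ^2 := sq_abs μ
    set g : ℝ → ℝ := fun x => |μ| * Real.tan x - c with hgdef
    set t : ℝ → ℝ := fun s => Real.arctan ((s + c)/|μ|) with htdef
    set y : ℝ → E3 := fun x => ‖α (g x)‖⁻¹ • α (g x) with hydef
    refine ⟨y, fun s => ‖α s‖, t, ?_⟩
    intro s hs
    have hrpos : (0:ℝ) < ‖α s‖ := norm_pos_iff.mpr (hαne s hs)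
    have hrne : ‖α s‖ ≠ 0 := hrpos.ne'
    have hr2 : ‖α s‖^2 = (s+c)^2 + μ^2 := hnr s hs
    have hgt : g (t s) = s := by
      simp only [hgdef, htdef, Real.tan_arctan]
      field_simp
      ring
    have hyts : y (t s) = ‖α s‖⁻¹ • α s := by rw [hydef]; simp only [hgt]
    -- derivative of the norm
    have hAv : ⟪α s, T s⟫ = s + c := hAs s hs
    have hAv' : ⟪T s, α s⟫ = s + c := by rw [real_inner_comm]; exact hAv
    have hq : HasDerivAt (fun x => ⟪α x, α x⟫) (2*(s+c)) s := by
      have h := HasDerivAt.inner ℝ (hα s hs) (hα s hs)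
      exact h.congr_deriv (by rw [hAv, hAv']; ring)
    have hr' : HasDerivAt (fun x => ‖α x‖) ((s+c)/‖α s‖) s := by
      have hqpos : (0:ℝ) < ⟪α s, α s⟫ := by
        rw [real_inner_self_eq_norm_sq, hr2]
        have : μ^2 > 0 := by positivity
        nlinarith [sq_nonneg (s+c)]
      have hsq := (Real.hasDerivAt_sqrt hqpos.ne').comp s hq
      have heq : (fun x => ‖α x‖) = Real.sqrt ∘ fun x => ⟪α x, α x⟫ := by
        funext x
        simp only [Function.comp]
        rw [real_inner_self_eq_norm_mul_norm, Real.sqrt_mul_self (norm_nonneg _)]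
      rw [heq]
      refine hsq.congr_deriv ?_
      rw [real_inner_self_eq_norm_mul_norm, Real.sqrt_mul_self (norm_nonneg _)]
      field_simp
    -- derivative of the normalized curve
    have key2 : ∀ r : ℝ, r ≠ 0 → r^2 = (s+c)^2 + μ^2 →
        r⁻¹ • T s + (-((s+c)/r)/r^2) • ((s+c) • T s + μ • B s)
          = (μ^2/r^3) • T s + (-((s+c)*μ/r^3)) • B s := by
      intro r hr hr2'
      match_scalars
      · field_simp
        linear_combination hr2'
      · field_simp
    have hFd : HasDerivAt (fun x => ‖α x‖⁻¹ • α x)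
        ((μ^2/‖α s‖^3) • T s + (-((s+c)*μ/‖α s‖^3)) • B s) s := by
      have h := (hr'.inv hrne).smul (hα s hs)
      have heq := key2 ‖α s‖ hrne hr2
      rw [← hdec s hs] at heq
      simp only [Pi.inv_apply] at h; rw [heq] at h
      exact h
    -- derivative of g at t s
    have hg' : HasDerivAt g (‖α s‖^2/|μ|) (t s) := by
      have hcos : Real.cos (t s) ≠ 0 := (Real.cos_arctan_pos _).ne'
      have htan := Real.hasDerivAt_tan hcos
      have h := (htan.const_mul |μ|).sub_const c
      refine h.congr_deriv ?_
      symm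
      simp only [htdef]
      rw [Real.cos_sq_arctan, one_div_one_div, hr2, ← habs2]
      field_simp
      ring
    have hyd : HasDerivAt y
        ((‖α s‖^2/|μ|) • ((μ^2/‖α s‖^3) • T s + (-((s+c)*μ/‖α s‖^3)) • B s)) (t s) :=
      HasDerivAt.scomp_of_eq (hg := hFd) (hh := hg') (hy := hgt.symm)
    set D : E3 := (‖α s‖^2/|μ|) • ((μ^2/‖α s‖^3) • T s + (-((s+c)*μ/‖α s‖^3)) • B s) with hDdef
    have hDeq : D = (μ^2/(|μ| * ‖α s‖)) • T s + (-((s+c)*μ/(|μ| * ‖α s‖))) • B s := by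
      rw [hDdef, smul_add, smul_smul, smul_smul]
      congr 1
      · congr 1
        field_simp
      · congr 1
        field_simp
    have hDD : ⟪D, D⟫ = 1 := by
      rw [hDeq]
      simp only [inner_add_left, inner_add_right, real_inner_smul_left, real_inner_smul_right,
        iTT s hs, iTB s hs, iBT s hs, iBB s hs]
      field_simp
      linear_combination (-(μ^2)) * hr2 - ‖α s‖^2 * habs2
    have hDnorm : ‖D‖ = 1 := by
      have h1 : ‖D‖^2 = 1 := by rw [← real_inner_self_eq_norm_sq]; exact hDD
      have h2 : ‖D‖ = Real.sqrt (‖D‖^2) := (Real.sqrt_sq (norm_nonneg _)).symm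
      rw [h2, h1, Real.sqrt_one]
    have hderiv : deriv y (t s) = D := hyd.deriv
    have hcrossTB : cross3 (T s) (B s) = -(N s) := by
      rw [hBdef s hs, cross_cross_self, iTN s hs, iTT s hs]
      simp
    have key3 : ∀ r : ℝ, r ≠ 0 →
        r⁻¹ • ((s+c) • T s + μ • B s) = ((s+c)/r) • T s + (μ/r) • B s := by
      intro r hr
      match_scalars <;> field_simp
    have hyts2 : y (t s) = ((s+c)/‖α s‖) • T s + (μ/‖α s‖) • B s := by
      have h := key3 ‖α s‖ hrne
      rw [← hdec s hs] at h
      rw [hyts, h]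
    have hcross : cross3 D (y (t s)) = (μ/|μ|) • (-(N s)) := by
      rw [hDeq, hyts2, cross3_combo, hcrossTB]
      congr 1
      field_simp
      linear_combination -hr2
    refine ⟨?_, ?_, ?_, hrpos, ?_, ?_⟩
    · rw [hyts, norm_smul, norm_inv, norm_norm, inv_mul_cancel₀ hrne]
    · rw [hderiv]; exact hyd
    · rw [hderiv]; exact hDnorm
    · rw [hyts, smul_inv_smul₀ hrne]
    · rw [hderiv]
      rcases hμ.lt_or_gt with hneg | hpos
      · left
        rw [hcross, abs_of_neg hneg]
        have : μ / -μ = -1 := by field_simp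
        rw [this]
        simp
      · right
        rw [hcross, abs_of_pos hpos]
        have : μ / μ = 1 := by field_simp
        rw [this]
        simp
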